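/- Eigenvalue property of second-order critical points: Let d ≥ 2 and let G ∈ O(d)^{⊗n} be a second-order critical point of (QP). Then for each i ∈ [n], the matrix C_iᵀ G G_iᵀ − C_{ii} is symmetric and the sum of its two smallest eigenvalues is nonnegative, i.e. λ_{d−1}(C_iᵀ G G_iᵀ − C_{ii}) + λ_d(C_iᵀ G G_iᵀ − C_{ii}) ≥ 0, where λ_1 ≥ … ≥ λ_d are the eigenvalues in decreasing order. -/

import Mathlib

open Matrix BigOperators

noncomputable section
namespace GroupSync

variable {n d : ℕ}

/-- Frobenius norm of a real matrix. -/
def frob {m k : Type*} [Fintype m] [Fintype k] (X : Matrix m k ℝ) : ℝ :=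
  Real.sqrt (∑ i, ∑ j, (X i j) ^ 2)

/-- Spectral (operator) norm of a real matrix: the operator norm of the induced
linear map between Euclidean spaces. -/
def spec {m k : Type*} [Fintype m] [Fintype k] [DecidableEq k] (X : Matrix m k ℝ) : ℝ :=
  ‖LinearMap.toContinuousLinearMap (Matrix.toEuclideanLin X)‖

/-- Nuclear norm: trace of the positive semidefinite square root of `X * Xᵀ`
(i.e. the sum of the singular values of `X`). -/
def nuclear {m k : Type*} [Fintype m] [Fintype k] [DecidableEq m] (X : Matrix m k ℝ) : ℝ :=
  ((Matrix.posSemidef_self_mul_conjTranspose X).1.eigenvectorUnitary.1 *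
    diagonal ((RCLike.ofReal : ℝ → ℝ) ∘ (√·) ∘ (Matrix.posSemidef_self_mul_conjTranspose X).1.eigenvalues) *
    (star (Matrix.posSemidef_self_mul_conjTranspose X).1.eigenvectorUnitary : Matrix m m ℝ)).trace

/-- The positive semidefinite square root of `X * Xᵀ`. -/
def psdSqrtMulT {m k : Type*} [Fintype m] [Fintype k] [DecidableEq m] (X : Matrix m k ℝ) :
    Matrix m m ℝ :=
  ((Matrix.posSemidef_self_mul_conjTranspose X).1.eigenvectorUnitary.1 *
    diagonal ((RCLike.ofReal : ℝ → ℝ) ∘ (√·) ∘ (Matrix.posSemidef_self_mul_conjTranspose X).1.eigenvalues) *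
    (star (Matrix.posSemidef_self_mul_conjTranspose X).1.eigenvectorUnitary : Matrix m m ℝ))

/-- Membership in the orthogonal group `O(d)`. -/
def IsOd (g : Matrix (Fin d) (Fin d) ℝ) : Prop :=
  gᵀ * g = 1 ∧ g * gᵀ = 1

/-- Membership in the special orthogonal group `SO(d)`. -/
def IsSOd (g : Matrix (Fin d) (Fin d) ℝ) : Prop :=
  IsOd g ∧ g.det = 1

/-- The `i`-th `d × d` block of an `nd × d` matrix. -/
def blk (X : Matrix (Fin n × Fin d) (Fin d) ℝ) (i : Fin n) : Matrix (Fin d) (Fin d) ℝ :=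
  Matrix.of fun a b => X (i, a) b

/-- Membership in `O(d)^{⊗n}`: every `d × d` block is orthogonal. -/
def OdN (G : Matrix (Fin n × Fin d) (Fin d) ℝ) : Prop :=
  ∀ i : Fin n, IsOd (blk G i)

/-- Membership in `SO(d)^{⊗n}`. -/
def SOdN (G : Matrix (Fin n × Fin d) (Fin d) ℝ) : Prop :=
  ∀ i : Fin n, IsSOd (blk G i)

/-- The `i`-th block column (an `nd × d` matrix) of an `nd × nd` matrix. -/
def bcol (M : Matrix (Fin n × Fin d) (Fin n × Fin d) ℝ) (i : Fin n) :
    Matrix (Fin n × Fin d) (Fin d) ℝ :=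
  Matrix.of fun p b => M p (i, b)

/-- The `ij`-th `d × d` block of an `nd × nd` matrix. -/
def dblk (M : Matrix (Fin n × Fin d) (Fin n × Fin d) ℝ) (i j : Fin n) :
    Matrix (Fin d) (Fin d) ℝ :=
  Matrix.of fun a b => M (i, a) (j, b)

/-- `G' ∈ T_α(G)` (where `Ct = C + α I`): `G' ∈ O(d)^{⊗n}` and each block `G'_i` is a
nearest point of `C̃ᵢᵀ G` in `O(d)` w.r.t. the Frobenius norm. -/
def InT (Ct : Matrix (Fin n × Fin d) (Fin n × Fin d) ℝ)
    (G G' : Matrix (Fin n × Fin d) (Fin d) ℝ) : Prop :=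
  OdN G' ∧ ∀ i : Fin n, ∀ X : Matrix (Fin d) (Fin d) ℝ, IsOd X →
    frob (blk G' i - (bcol Ct i)ᵀ * G) ≤ frob (X - (bcol Ct i)ᵀ * G)

/-- `G' ∈ ST_α(G)`: the `SO(d)` analogue of `InT`. -/
def InST (Ct : Matrix (Fin n × Fin d) (Fin n × Fin d) ℝ)
    (G G' : Matrix (Fin n × Fin d) (Fin d) ℝ) : Prop :=
  SOdN G' ∧ ∀ i : Fin n, ∀ X : Matrix (Fin d) (Fin d) ℝ, IsSOd X →
    frob (blk G' i - (bcol Ct i)ᵀ * G) ≤ frob (X - (bcol Ct i)ᵀ * G)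

/-- The quotient distance `d(X, Y) = min_{g ∈ O(d)} ‖X − Y g‖_F`. -/
def dOrth (X Y : Matrix (Fin n × Fin d) (Fin d) ℝ) : ℝ :=
  ⨅ g : {g : Matrix (Fin d) (Fin d) ℝ // IsOd g}, frob (X - Y * g.1)

/-- The objective function `f(G) = tr(Gᵀ C G)`. -/
def obj (C : Matrix (Fin n × Fin d) (Fin n × Fin d) ℝ)
    (G : Matrix (Fin n × Fin d) (Fin d) ℝ) : ℝ :=
  Matrix.trace (Gᵀ * C * G)

/-- Hadamard (entrywise) product. -/
def had {m k : Type*} (X Y : Matrix m k ℝ) : Matrix m k ℝ :=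
  Matrix.of fun p q => X p q * Y p q

/-- `W ⊗ (1_d 1_dᵀ)`, the Kronecker product of `W` with the all-ones `d × d` matrix. -/
def kron1 (W : Matrix (Fin n) (Fin n) ℝ) : Matrix (Fin n × Fin d) (Fin n × Fin d) ℝ :=
  Matrix.kroneckerMap (· * ·) W (Matrix.of fun (_ _ : Fin d) => (1 : ℝ))

/-- The all-ones matrix `1_m 1_mᵀ`. -/
def onesMat (m : Type*) : Matrix m m ℝ :=
  Matrix.of fun _ _ => (1 : ℝ)

/-- `symblockdiag`: symmetrize the diagonal `d × d` blocks, zero out all other blocks. -/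
def sbd (X : Matrix (Fin n × Fin d) (Fin n × Fin d) ℝ) :
    Matrix (Fin n × Fin d) (Fin n × Fin d) ℝ :=
  Matrix.of fun p q => if p.1 = q.1 then (X p q + X (p.1, q.2) (q.1, p.2)) / 2 else 0

/-- `S(G) = symblockdiag(C G Gᵀ) − C`. -/
def Smat (C : Matrix (Fin n × Fin d) (Fin n × Fin d) ℝ)
    (G : Matrix (Fin n × Fin d) (Fin d) ℝ) : Matrix (Fin n × Fin d) (Fin n × Fin d) ℝ :=
  sbd (C * (G * Gᵀ)) - C

/-- `G` is a second-order critical point of (QP): `S(G) G = 0` and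
`⟨H, S(G) H⟩ ≥ 0` for all tangent directions `H` (blockwise `Hᵢ Gᵢᵀ` skew-symmetric). -/
def IsSOC (C : Matrix (Fin n × Fin d) (Fin n × Fin d) ℝ)
    (G : Matrix (Fin n × Fin d) (Fin d) ℝ) : Prop :=
  Smat C G * G = 0 ∧
  ∀ H : Matrix (Fin n × Fin d) (Fin d) ℝ,
    (∀ i : Fin n, (blk H i * (blk G i)ᵀ)ᵀ = -(blk H i * (blk G i)ᵀ)) →
    0 ≤ Matrix.trace (Hᵀ * (Smat C G * H))

/-- Smallest singular value of a square matrix, as the minimum of `‖M v‖` over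
unit vectors `v`. -/
def sigmaMin (M : Matrix (Fin d) (Fin d) ℝ) : ℝ :=
  ⨅ v : {v : Fin d → ℝ // ∑ a, (v a) ^ 2 = 1}, Real.sqrt (∑ a, (M.mulVec v.1 a) ^ 2)

/-- The singular values of a square matrix: square roots of the eigenvalues of `Mᵀ M`. -/
def singVal (M : Matrix (Fin d) (Fin d) ℝ) (l : Fin d) : ℝ :=
  Real.sqrt ((Matrix.isHermitian_conjTranspose_mul_self M).eigenvalues l)

/-- Smallest eigenvalue of a (symmetric) matrix, as the minimum Rayleigh quotient
over unit vectors. -/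
def lambdaMin {m : Type*} [Fintype m] (M : Matrix m m ℝ) : ℝ :=
  ⨅ v : {v : m → ℝ // ∑ i, (v i) ^ 2 = 1}, v.1 ⬝ᵥ M.mulVec v.1

/-- `D_α(G)`: block diagonal of the psd square roots of `(C̃ᵢᵀ G)(C̃ᵢᵀ G)ᵀ`, minus `C̃`. -/
def Dmat (Ct : Matrix (Fin n × Fin d) (Fin n × Fin d) ℝ)
    (G : Matrix (Fin n × Fin d) (Fin d) ℝ) : Matrix (Fin n × Fin d) (Fin n × Fin d) ℝ :=
  (Matrix.of fun p q =>
    if p.1 = q.1 then psdSqrtMulT ((bcol Ct p.1)ᵀ * G) p.2 q.2 else 0) - Ct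

/-- The residual function `ρ_α(G) = ‖D_α(G) G‖_F`. -/
def rho (Ct : Matrix (Fin n × Fin d) (Fin n × Fin d) ℝ)
    (G : Matrix (Fin n × Fin d) (Fin d) ℝ) : ℝ :=
  frob (Dmat Ct G * G)

/-- Blockwise infinity norm: `‖X‖_∞ = max_i ‖X_i‖` (spectral norm of the blocks). -/
def binf (X : Matrix (Fin n × Fin d) (Fin d) ℝ) : ℝ :=
  ⨆ i : Fin n, spec (blk X i)


/-- The inclusion matrix of the `i`-th block. -/
def Jmat {n d : ℕ} (i : Fin n) : Matrix (Fin n × Fin d) (Fin d) ℝ :=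
  Matrix.of fun p c => if p.1 = i ∧ p.2 = c then 1 else 0

lemma Jmat_conj {n d : ℕ} (i : Fin n)
    (S : Matrix (Fin n × Fin d) (Fin n × Fin d) ℝ) :
    (Jmat (d := d) i)ᵀ * (S * Jmat (d := d) i) = dblk S i i := by
  ext a b
  simp only [dblk, mul_apply, transpose_apply, Jmat, Matrix.of_apply, ite_and,
    mul_ite, mul_one, mul_zero, Finset.sum_ite_eq, Finset.mem_univ, if_true]
  rw [Fintype.sum_prod_type]
  simp [Finset.sum_ite_eq, Fintype.sum_prod_type]

lemma blk_Jmat_mul {n d : ℕ} (i i' : Fin n) (K : Matrix (Fin d) (Fin d) ℝ) :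
    blk (Jmat (d := d) i * K) i' = if i' = i then K else 0 := by
  ext a b
  by_cases h : i' = i <;>
    simp [blk, mul_apply, Jmat, ite_and, h, Finset.sum_ite_eq]

lemma vmv_mul {d : ℕ} (u v w z : Fin d → ℝ) :
    vecMulVec u v * vecMulVec w z = (v ⬝ᵥ w) • vecMulVec u z := by
  ext a b
  simp only [mul_apply, vecMulVec_apply, Matrix.smul_apply, dotProduct, smul_eq_mul,
    Finset.sum_mul]
  exact Finset.sum_congr rfl fun c _ => by ring

lemma trace_mul_vmv {d : ℕ} (M : Matrix (Fin d) (Fin d) ℝ) (u w : Fin d → ℝ) :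
    Matrix.trace (M * vecMulVec u w) = w ⬝ᵥ (M *ᵥ u) := by
  simp only [Matrix.trace, diag_apply, mul_apply, vecMulVec_apply, dotProduct,
    mulVec, Finset.mul_sum]
  exact Finset.sum_congr rfl fun a _ => Finset.sum_congr rfl fun c _ => by ring

/-- eigenvalue property of second-order critical points.
Let `d ≥ 2`, `C` symmetric, and let `G ∈ O(d)^{⊗n}` be a second-order critical point
of (QP). Then for each `i`, the matrix `Cᵢᵀ G Gᵢᵀ − C_{ii}` is symmetric and the sum of
its two smallest eigenvalues is nonnegative (equivalently, the sum of any two of its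
eigenvalues, counted with multiplicity, is nonnegative). -/
theorem second_order_critical_eigenvalue_sum {n d : ℕ} (hd : 2 ≤ d)
    (C : Matrix (Fin n × Fin d) (Fin n × Fin d) ℝ) (hCsymm : Cᵀ = C)
    (G : Matrix (Fin n × Fin d) (Fin d) ℝ) (hG : OdN G)
    (hsoc : IsSOC C G) :
    ∀ i : Fin n,
      ∃ hM : ((bcol C i)ᵀ * G * (blk G i)ᵀ - dblk C i i).IsHermitian,
        ∀ j k : Fin d, j ≠ k → 0 ≤ hM.eigenvalues j + hM.eigenvalues k := by
  intro i
  obtain ⟨hG1, hG2⟩ := hG i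
  set Gi := blk G i with hGi
  set P : Matrix (Fin d) (Fin d) ℝ := (bcol C i)ᵀ * G * Giᵀ with hP
  set Y : Matrix (Fin d) (Fin d) ℝ := dblk (sbd (C * (G * Gᵀ))) i i with hYdef
  -- symmetry of Y
  have hYsym : Yᵀ = Y := by
    ext a b
    simp only [hYdef, transpose_apply, dblk, sbd, Matrix.of_apply, if_true]
    ring
  have hCe : ∀ p q, C p q = C q p := fun p q =>
    ((congrFun (congrFun hCsymm p) q).symm : C p q = C q p)
  -- first-order condition, block i
  have hfo : Y * Gi = (bcol C i)ᵀ * G := by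
    ext a b
    have h0 : (Smat C G * G) (i, a) b = 0 := by rw [hsoc.1]; rfl
    rw [mul_apply] at h0
    have hsplit : ∀ q, Smat C G (i, a) q * G q b
        = sbd (C * (G * Gᵀ)) (i, a) q * G q b - C (i, a) q * G q b := by
      intro q; simp [Smat, sub_mul]
    rw [Finset.sum_congr rfl (fun q _ => hsplit q), Finset.sum_sub_distrib] at h0
    have h1 : ∑ q, sbd (C * (G * Gᵀ)) (i, a) q * G q b = (Y * Gi) a b := by
      rw [mul_apply, Fintype.sum_prod_type]
      simp only [sbd, Matrix.of_apply, ite_mul, zero_mul, Finset.sum_ite_irrel,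
        Finset.sum_const_zero, Finset.sum_ite_eq, Finset.mem_univ, if_true]
      exact Finset.sum_congr rfl fun c _ => by
        simp [hYdef, dblk, sbd, hGi, blk]
    have h2 : ∑ q, C (i, a) q * G q b = ((bcol C i)ᵀ * G) a b := by
      rw [mul_apply]
      exact Finset.sum_congr rfl fun q _ => by
        simp [bcol, hCe (i, a) q]
    rw [h1, h2] at h0
    linarith
  have hYP : Y = P := by
    calc Y = Y * (Gi * Giᵀ) := by rw [hG2, mul_one]
    _ = (Y * Gi) * Giᵀ := by rw [Matrix.mul_assoc]
    _ = P := by rw [hfo]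
  have hPsym : Pᵀ = P := by rw [← hYP]; exact hYsym
  have hCiisym : (dblk C i i)ᵀ = dblk C i i := by
    ext a b
    exact hCe (i, b) (i, a)
  set M : Matrix (Fin d) (Fin d) ℝ := (bcol C i)ᵀ * G * (blk G i)ᵀ - dblk C i i with hMdef
  have hMP : M = P - dblk C i i := by rw [hMdef, hP, hGi]
  have hMsym : Mᵀ = M := by rw [hMP, transpose_sub, hPsym, hCiisym]
  have hM : M.IsHermitian := by
    ext a b
    have := congrFun (congrFun hMsym a) b
    simpa [Matrix.conjTranspose_apply] using this
  refine ⟨hM, ?_⟩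
  intro j k hjk
  -- block of Smat
  have hSblk : dblk (Smat C G) i i = M := by
    have : dblk (Smat C G) i i = Y - dblk C i i := by
      ext a b
      simp [Smat, dblk, sbd, hYdef]
    rw [this, hYP, hMP]
  -- eigenvector setup
  set u : Fin d → ℝ := ⇑(hM.eigenvectorBasis j) with hu
  set v : Fin d → ℝ := ⇑(hM.eigenvectorBasis k) with hv
  have hMu : M *ᵥ u = hM.eigenvalues j • u := hM.mulVec_eigenvectorBasis j
  have hMv : M *ᵥ v = hM.eigenvalues k • v := hM.mulVec_eigenvectorBasis k
  have horth : ∀ a b : Fin d,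
      (inner (𝕜 := ℝ) (hM.eigenvectorBasis a) (hM.eigenvectorBasis b))
        = if a = b then 1 else 0 :=
    fun a b => orthonormal_iff_ite.mp hM.eigenvectorBasis.orthonormal a b
  have hinner : ∀ a b : Fin d,
      (⇑(hM.eigenvectorBasis a) : Fin d → ℝ) ⬝ᵥ ⇑(hM.eigenvectorBasis b)
        = if a = b then 1 else 0 := by
    intro a b
    rw [← horth a b]
    simp [PiLp.inner_apply, dotProduct, mul_comm]
  have huu : u ⬝ᵥ u = 1 := by rw [hu]; simpa using hinner j j
  have hvv : v ⬝ᵥ v = 1 := by rw [hv]; simpa using hinner k k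
  have huv : u ⬝ᵥ v = 0 := by rw [hu, hv]; simpa [hjk] using hinner j k
  have hvu : v ⬝ᵥ u = 0 := by rw [hu, hv]; simpa [hjk.symm] using hinner k j
  set A : Matrix (Fin d) (Fin d) ℝ := vecMulVec u v - vecMulVec v u with hA
  have hAT : Aᵀ = -A := by
    rw [hA, transpose_sub]
    have h1 : (vecMulVec u v)ᵀ = vecMulVec v u := by
      ext a b; simp [vecMulVec_apply, mul_comm]
    have h2 : (vecMulVec v u)ᵀ = vecMulVec u v := by
      ext a b; simp [vecMulVec_apply, mul_comm]
    rw [h1, h2]; abel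
  set K : Matrix (Fin d) (Fin d) ℝ := A * Gi with hK
  set H : Matrix (Fin n × Fin d) (Fin d) ℝ := Jmat (d := d) i * K with hH
  have hskew : ∀ i' : Fin n, (blk H i' * (blk G i')ᵀ)ᵀ = -(blk H i' * (blk G i')ᵀ) := by
    intro i'
    by_cases h : i' = i
    · subst h
      rw [hH, blk_Jmat_mul, if_pos rfl, hK, Matrix.mul_assoc, ← hGi, hG2, mul_one,
        hAT]
    · rw [hH, blk_Jmat_mul, if_neg h]
      simp
  have h2nd := hsoc.2 H hskew
  -- compute the trace
  have htr : Matrix.trace (Hᵀ * (Smat C G * H))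
      = hM.eigenvalues j + hM.eigenvalues k := by
    have e1 : Hᵀ * (Smat C G * H) = Kᵀ * (((Jmat (d := d) i)ᵀ * (Smat C G * Jmat (d := d) i)) * K) := by
      rw [hH, transpose_mul]
      noncomm_ring [Matrix.mul_assoc]
    rw [e1, Jmat_conj, hSblk]
    have e2 : Matrix.trace (Kᵀ * (M * K)) = Matrix.trace (M * (K * Kᵀ)) := by
      rw [← Matrix.mul_assoc, Matrix.trace_mul_comm, ← Matrix.mul_assoc,
        Matrix.trace_mul_comm]
    rw [e2]
    have hKK : K * Kᵀ = vecMulVec u u + vecMulVec v v := by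
      rw [hK, transpose_mul, Matrix.mul_assoc, ← Matrix.mul_assoc Gi, hG2,
        Matrix.one_mul, hAT, hA]
      rw [Matrix.mul_neg, sub_mul, Matrix.mul_sub, Matrix.mul_sub]
      rw [vmv_mul u v u v, vmv_mul u v v u, vmv_mul v u u v, vmv_mul v u v u]
      rw [huu, hvv, huv, hvu]
      simp only [one_smul, zero_smul]
      abel
    rw [hKK, Matrix.mul_add, Matrix.trace_add, trace_mul_vmv, trace_mul_vmv,
      hMu, hMv, dotProduct_smul, dotProduct_smul, huu, hvv]
    simp
  linarith [htr ▸ h2nd]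

end GroupSync
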